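/- Let τ be a representation of the balanced pairs of a finitely aligned P-graph Λ, fix p ∈ P, a vertex v, a finite set H ⊆ vΛ∖{v}, and for μ,ν ∈ Λ^p v define θ_{μ,ν} := τ_{μ,ν} ∏_{λ∈H}(τ_{ν,ν} − τ_{νλ,νλ}). Then θ_{μ,ν}* = θ_{ν,μ} and θ_{μ,ν} θ_{ρ,σ} = δ_{ν,ρ} θ_{μ,σ} for all μ,ν,ρ,σ ∈ Λ^p v; i.e., the θ_{μ,ν} form a family of matrix units. -/

import Mathlib

universe u

/-- A quasi-lattice ordered group in the sense of Nica: a (discrete) group `G` together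
with a subsemigroup `P` containing the identity with `P ∩ P⁻¹ = {1}`, such that under the
partial order `p ≤ q ↔ p⁻¹ * q ∈ P`, any pair of elements of `G` with a common upper bound
in `P` has a least common upper bound in `P`. -/
structure QLOGroup (G : Type u) [Group G] where
  P : Set G
  one_mem : (1 : G) ∈ P
  mul_mem : ∀ {p q : G}, p ∈ P → q ∈ P → p * q ∈ P
  eq_one_of_mem_inv_mem : ∀ p : G, p ∈ P → p⁻¹ ∈ P → p = 1
  lub_exists : ∀ p q : G, (∃ r ∈ P, p⁻¹ * r ∈ P ∧ q⁻¹ * r ∈ P) →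
    ∃ r ∈ P, p⁻¹ * r ∈ P ∧ q⁻¹ * r ∈ P ∧
      ∀ s ∈ P, p⁻¹ * s ∈ P → q⁻¹ * s ∈ P → r⁻¹ * s ∈ P

namespace QLOGroup

variable {G : Type u} [Group G]

/-- The left-invariant partial order on `G` induced by `P`. -/
def le (Q : QLOGroup G) (p q : G) : Prop := p⁻¹ * q ∈ Q.P

/-- `s` is the least common upper bound in `P` of `p` and `q` (i.e. `s = p ∨ q < ∞`). -/
def IsLub (Q : QLOGroup G) (p q s : G) : Prop :=
  s ∈ Q.P ∧ Q.le p s ∧ Q.le q s ∧ ∀ t ∈ Q.P, Q.le p t → Q.le q t → Q.le s t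

/-- `s` is the least upper bound in `P` of the set `A` (i.e. `s = ∨A < ∞`). -/
def IsLubSet (Q : QLOGroup G) (A : Set G) (s : G) : Prop :=
  s ∈ Q.P ∧ (∀ a ∈ A, Q.le a s) ∧ ∀ t ∈ Q.P, (∀ a ∈ A, Q.le a t) → Q.le s t

/-- `p` and `q` have a common upper bound in `P` (i.e. `p ∨ q < ∞`). -/
def HasLub (Q : QLOGroup G) (p q : G) : Prop := ∃ s, Q.IsLub p q s

/-- A subset `F` is `∨`-closed if whenever `p, q ∈ F` have `p ∨ q < ∞`, then `p ∨ q ∈ F`. -/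
def VeeClosed (Q : QLOGroup G) (F : Set G) : Prop :=
  ∀ p ∈ F, ∀ q ∈ F, ∀ s, Q.IsLub p q s → s ∈ F

/-- `F̄ = {∨A : A ⊆ F, A ≠ ∅, ∨A ≠ ∞}`. -/
def veeClosure (Q : QLOGroup G) (F : Set G) : Set G :=
  {s | ∃ A ⊆ F, A.Nonempty ∧ Q.IsLubSet A s}

end QLOGroup

/-- A `P`-graph for a quasi-lattice ordered group `(G,P)`: a countable category with a
degree functor `d` into `P` satisfying the unique factorisation property.  Composition is
written in the path order of Raeburn-Sims: `comp μ ν` is defined when `s(μ) = r(ν)` (with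
`src = s = dom` and `tgt = r = cod`), and `comp` is a total function whose axioms are only
imposed on composable pairs. -/
structure PGraph {G : Type u} [Group G] (Q : QLOGroup G) where
  Obj : Type
  Mor : Type
  countable_mor : Countable Mor
  src : Mor → Obj
  tgt : Mor → Obj
  ident : Obj → Mor
  comp : Mor → Mor → Mor
  src_ident : ∀ v, src (ident v) = v
  tgt_ident : ∀ v, tgt (ident v) = v
  src_comp : ∀ μ ν, src μ = tgt ν → src (comp μ ν) = src ν
  tgt_comp : ∀ μ ν, src μ = tgt ν → tgt (comp μ ν) = tgt μ
  id_comp : ∀ μ, comp (ident (tgt μ)) μ = μ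
  comp_id : ∀ μ, comp μ (ident (src μ)) = μ
  comp_assoc : ∀ μ ν ρ, src μ = tgt ν → src ν = tgt ρ →
    comp (comp μ ν) ρ = comp μ (comp ν ρ)
  d : Mor → G
  d_mem : ∀ μ, d μ ∈ Q.P
  d_ident : ∀ v, d (ident v) = 1
  d_comp : ∀ μ ν, src μ = tgt ν → d (comp μ ν) = d μ * d ν
  factorisation : ∀ (lam : Mor) (p q : G), p ∈ Q.P → q ∈ Q.P → d lam = p * q →
    ∃! mn : Mor × Mor, src mn.1 = tgt mn.2 ∧ lam = comp mn.1 mn.2 ∧ d mn.1 = p ∧ d mn.2 = q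

namespace PGraph

variable {G : Type u} [Group G] {Q : QLOGroup G} (Λ : PGraph Q)

/-- The prefix order: `λ ⪯ μ` iff `μ = λμ'` for some `μ'`. -/
def PrefixLe (lam mu : Λ.Mor) : Prop :=
  ∃ tail, Λ.src lam = Λ.tgt tail ∧ mu = Λ.comp lam tail

/-- The set of minimal common extensions of `μ` and `ν`. -/
def MCE (mu nu : Λ.Mor) : Set Λ.Mor :=
  {lam | Λ.PrefixLe mu lam ∧ Λ.PrefixLe nu lam ∧ Q.IsLub (Λ.d mu) (Λ.d nu) (Λ.d lam)}

/-- `Λ` is finitely aligned if all the sets `MCE(μ,ν)` are finite. -/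
def FinitelyAligned : Prop := ∀ mu nu : Λ.Mor, (Λ.MCE mu nu).Finite

/-- A filter of `Λ`: a nonempty subset that is downward closed (F1) and upward
directed (F2) for the prefix order. -/
def IsGraphFilter (U : Set Λ.Mor) : Prop :=
  U.Nonempty ∧ (∀ mu ∈ U, ∀ lam, Λ.PrefixLe lam mu → lam ∈ U) ∧
    (∀ mu ∈ U, ∀ nu ∈ U, ∃ lam ∈ U, Λ.PrefixLe mu lam ∧ Λ.PrefixLe nu lam)

/-- An ultrafilter of `Λ`: a filter maximal under inclusion. -/
def IsGraphUltrafilter (U : Set Λ.Mor) : Prop :=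
  Λ.IsGraphFilter U ∧ ∀ V, Λ.IsGraphFilter V → U ⊆ V → U = V

/-- `λ·U = ⋃_{μ ∈ U} {α : α ⪯ λμ}`. -/
def actFwd (lam : Λ.Mor) (U : Set Λ.Mor) : Set Λ.Mor :=
  {a | ∃ mu ∈ U, Λ.PrefixLe a (Λ.comp lam mu)}

/-- `λ*·V = {μ : λμ ∈ V}`. -/
def actBwd (lam : Λ.Mor) (V : Set Λ.Mor) : Set Λ.Mor :=
  {mu | Λ.src lam = Λ.tgt mu ∧ Λ.comp lam mu ∈ V}

/-- `(μ,ν)` is a balanced pair: `s(μ) = s(ν)` and `d(μ) = d(ν)`. -/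
def Balanced (mu nu : Λ.Mor) : Prop := Λ.src mu = Λ.src nu ∧ Λ.d mu = Λ.d nu

/-- The pairs `(α,β)` with `να = ξβ ∈ MCE(ν,ξ)`. -/
def MCEpairs (nu xi : Λ.Mor) : Set (Λ.Mor × Λ.Mor) :=
  {p | Λ.src nu = Λ.tgt p.1 ∧ Λ.src xi = Λ.tgt p.2 ∧
    Λ.comp nu p.1 = Λ.comp xi p.2 ∧ Λ.comp nu p.1 ∈ Λ.MCE nu xi}

end PGraph

/-- A representation of the balanced pairs `Λ *_{d,s} Λ` of `Λ` in a C*-algebra `A`: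
(B1) `τ_{μ,ν}* = τ_{ν,μ}` and
(B2) `τ_{μ,ν} τ_{ξ,η} = ∑_{να = ξβ ∈ MCE(ν,ξ)} τ_{μα,ηβ}`. -/
def PGraph.IsBalRep {G : Type u} [Group G] {Q : QLOGroup G} (Λ : PGraph Q)
    {A : Type*} [NormedRing A] [StarRing A] [CStarRing A]
    (τ : Λ.Mor → Λ.Mor → A) : Prop :=
  (∀ mu nu : Λ.Mor, Λ.Balanced mu nu → star (τ mu nu) = τ nu mu) ∧
  (∀ mu nu xi eta : Λ.Mor, Λ.Balanced mu nu → Λ.Balanced xi eta →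
    τ mu nu * τ xi eta =
      ∑ᶠ p ∈ Λ.MCEpairs nu xi, τ (Λ.comp mu p.1) (Λ.comp eta p.2))

/-- The elements `θ_{μ,ν} = τ_{μ,ν} ∏_{λ ∈ H} (τ_{ν,ν} − τ_{νλ,νλ})`, where the finite set
`H` is recorded as a duplicate-free list (the product is order-independent since the
factors commute). -/
noncomputable def PGraph.theta {G : Type u} [Group G] {Q : QLOGroup G} (Λ : PGraph Q)
    {A : Type*} [NormedRing A] [StarRing A] [CStarRing A]
    (τ : Λ.Mor → Λ.Mor → A) (H : List Λ.Mor) (mu nu : Λ.Mor) : A :=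
  τ mu nu * ((H.map fun lam => τ nu nu - τ (Λ.comp nu lam) (Λ.comp nu lam)).prod)


section Aux

open PGraph

variable {G : Type u} [Group G] {Q : QLOGroup G} (Λ : PGraph Q)

lemma aux_prefix_refl (x : Λ.Mor) : Λ.PrefixLe x x :=
  ⟨Λ.ident (Λ.src x), (Λ.tgt_ident _).symm, (Λ.comp_id x).symm⟩

lemma aux_le_refl (g : G) : Q.le g g := by
  show g⁻¹ * g ∈ Q.P
  rw [inv_mul_cancel]; exact Q.one_mem

lemma aux_le_antisymm {a b : G} (hab : Q.le a b) (hba : Q.le b a) : a = b := by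
  have h : a⁻¹ * b = 1 := Q.eq_one_of_mem_inv_mem _ hab
    (by rw [mul_inv_rev, inv_inv]; exact hba)
  exact inv_mul_eq_one.mp h

lemma aux_d_eq_one {t : Λ.Mor} (h : Λ.d t = 1) : t = Λ.ident (Λ.tgt t) := by
  obtain ⟨mn, hmn, huniq⟩ := Λ.factorisation t 1 1 Q.one_mem Q.one_mem (by rw [h, one_mul])
  have h1 : ((Λ.ident (Λ.tgt t), t) : Λ.Mor × Λ.Mor) = mn :=
    huniq _ ⟨by rw [Λ.src_ident], by rw [Λ.id_comp], Λ.d_ident _, h⟩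
  have h2 : ((t, Λ.ident (Λ.src t)) : Λ.Mor × Λ.Mor) = mn :=
    huniq _ ⟨by rw [Λ.tgt_ident], by rw [Λ.comp_id], h, Λ.d_ident _⟩
  exact (congrArg Prod.fst (h1.trans h2.symm)).symm

lemma aux_cancel_left {x a b : Λ.Mor} (ha : Λ.src x = Λ.tgt a) (hb : Λ.src x = Λ.tgt b)
    (hc : Λ.comp x a = Λ.comp x b) (hd : Λ.d a = Λ.d b) : a = b := by
  obtain ⟨mn, hmn, huniq⟩ := Λ.factorisation (Λ.comp x a) (Λ.d x) (Λ.d a)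
    (Λ.d_mem x) (Λ.d_mem a) (Λ.d_comp x a ha)
  have h1 := huniq (x, a) ⟨ha, rfl, rfl, rfl⟩
  have h2 := huniq (x, b) ⟨hb, hc, rfl, hd.symm⟩
  exact congrArg Prod.snd (h1.trans h2.symm)

lemma aux_prefix_unique {x y g : Λ.Mor} (hx : Λ.PrefixLe x g) (hy : Λ.PrefixLe y g)
    (hd : Λ.d x = Λ.d y) : x = y := by
  obtain ⟨a, ha, rfl⟩ := hx
  obtain ⟨b, hb, hg⟩ := hy
  have key : Λ.d x * Λ.d a = Λ.d x * Λ.d b := by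
    rw [← Λ.d_comp x a ha, hg, Λ.d_comp y b hb, hd]
  have hda : Λ.d a = Λ.d b := mul_left_cancel key
  obtain ⟨mn, hmn, huniq⟩ := Λ.factorisation (Λ.comp x a) (Λ.d x) (Λ.d a)
    (Λ.d_mem x) (Λ.d_mem a) (Λ.d_comp x a ha)
  have h1 := huniq (x, a) ⟨ha, rfl, rfl, rfl⟩
  have h2 := huniq (y, b) ⟨hb, hg, hd.symm, hda.symm⟩
  exact congrArg Prod.fst (h1.trans h2.symm)

lemma aux_prefix_trans {x y z : Λ.Mor} (h1 : Λ.PrefixLe x y) (h2 : Λ.PrefixLe y z) :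
    Λ.PrefixLe x z := by
  obtain ⟨a, ha, rfl⟩ := h1
  obtain ⟨b, hb, rfl⟩ := h2
  have hab : Λ.src a = Λ.tgt b := by rw [← Λ.src_comp x a ha]; exact hb
  refine ⟨Λ.comp a b, ?_, Λ.comp_assoc x a b ha hab⟩
  rw [Λ.tgt_comp a b hab]; exact ha

lemma aux_le_d_comp {x lam : Λ.Mor} (h : Λ.src x = Λ.tgt lam) :
    Q.le (Λ.d x) (Λ.d (Λ.comp x lam)) := by
  show (Λ.d x)⁻¹ * Λ.d (Λ.comp x lam) ∈ Q.P
  rw [Λ.d_comp x lam h, ← mul_assoc, inv_mul_cancel, one_mul]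
  exact Λ.d_mem lam

lemma aux_mce_symm (x y : Λ.Mor) : Λ.MCE x y = Λ.MCE y x := by
  ext g
  simp only [PGraph.MCE, Set.mem_setOf_eq, QLOGroup.IsLub]
  tauto

lemma aux_mce_comp {x lam : Λ.Mor} (h : Λ.src x = Λ.tgt lam) :
    Λ.MCE x (Λ.comp x lam) = {Λ.comp x lam} := by
  ext g
  simp only [PGraph.MCE, Set.mem_setOf_eq, Set.mem_singleton_iff]
  constructor
  · rintro ⟨hx, ⟨t, ht, rfl⟩, hlub⟩
    have hge : Q.le (Λ.d (Λ.comp (Λ.comp x lam) t)) (Λ.d (Λ.comp x lam)) :=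
      hlub.2.2.2 _ (Λ.d_mem _) (aux_le_d_comp Λ h) (aux_le_refl _)
    have hle : Q.le (Λ.d (Λ.comp x lam)) (Λ.d (Λ.comp (Λ.comp x lam) t)) :=
      aux_le_d_comp Λ ht
    have hdeq : Λ.d (Λ.comp x lam) = Λ.d (Λ.comp (Λ.comp x lam) t) := aux_le_antisymm hle hge
    have hdt : Λ.d t = 1 := by
      refine mul_left_cancel (a := Λ.d (Λ.comp x lam)) ?_
      rw [mul_one, ← Λ.d_comp _ t ht, ← hdeq]
    have ht' : t = Λ.ident (Λ.src (Λ.comp x lam)) := by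
      rw [aux_d_eq_one Λ hdt, ← ht]
    rw [ht', Λ.comp_id]
  · rintro rfl
    exact ⟨⟨lam, h, rfl⟩, aux_prefix_refl Λ _,
      Λ.d_mem _, aux_le_d_comp Λ h, aux_le_refl _, fun t _ _ h2 => h2⟩

lemma aux_mce_comp' {x lam : Λ.Mor} (h : Λ.src x = Λ.tgt lam) :
    Λ.MCE (Λ.comp x lam) x = {Λ.comp x lam} :=
  (aux_mce_symm Λ _ _).trans (aux_mce_comp Λ h)

lemma aux_mcepairs_comp {x lam : Λ.Mor} (h : Λ.src x = Λ.tgt lam) :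
    Λ.MCEpairs x (Λ.comp x lam) = {(lam, Λ.ident (Λ.src lam))} := by
  ext q
  obtain ⟨al, be⟩ := q
  simp only [PGraph.MCEpairs, Set.mem_setOf_eq, Set.mem_singleton_iff, Prod.mk.injEq]
  constructor
  · rintro ⟨h1, h2, h3, h4⟩
    rw [aux_mce_comp Λ h] at h4
    have h4' : Λ.comp x al = Λ.comp x lam := h4
    have hda : Λ.d al = Λ.d lam := mul_left_cancel
      (by rw [← Λ.d_comp x al h1, h4', Λ.d_comp x lam h])
    have hal : al = lam := aux_cancel_left Λ h1 h h4' hda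
    have hdbe : Λ.d be = 1 := by
      refine mul_left_cancel (a := Λ.d (Λ.comp x lam)) ?_
      rw [mul_one, ← Λ.d_comp _ be h2, ← h3, h4']
    have hbe : be = Λ.ident (Λ.src lam) := by
      rw [aux_d_eq_one Λ hdbe, ← h2, Λ.src_comp x lam h]
    exact ⟨hal, hbe⟩
  · rintro ⟨rfl, rfl⟩
    refine ⟨h, ?_, ?_, ?_⟩
    · rw [Λ.tgt_ident, Λ.src_comp x al h]
    · rw [← Λ.src_comp x al h, Λ.comp_id]
    · rw [aux_mce_comp Λ h]; rfl

lemma aux_mcepairs_comp' {x lam : Λ.Mor} (h : Λ.src x = Λ.tgt lam) :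
    Λ.MCEpairs (Λ.comp x lam) x = {(Λ.ident (Λ.src lam), lam)} := by
  ext q
  obtain ⟨al, be⟩ := q
  simp only [PGraph.MCEpairs, Set.mem_setOf_eq, Set.mem_singleton_iff, Prod.mk.injEq]
  constructor
  · rintro ⟨h1, h2, h3, h4⟩
    rw [aux_mce_comp' Λ h] at h4
    have h4' : Λ.comp (Λ.comp x lam) al = Λ.comp x lam := h4
    have hdal : Λ.d al = 1 := by
      refine mul_left_cancel (a := Λ.d (Λ.comp x lam)) ?_
      rw [mul_one, ← Λ.d_comp _ al h1, h4']
    have hal : al = Λ.ident (Λ.src lam) := by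
      rw [aux_d_eq_one Λ hdal, ← h1, Λ.src_comp x lam h]
    have h5 : Λ.comp x be = Λ.comp x lam := by rw [← h3, h4']
    have hdbe : Λ.d be = Λ.d lam := mul_left_cancel
      (by rw [← Λ.d_comp x be h2, h5, Λ.d_comp x lam h])
    exact ⟨hal, aux_cancel_left Λ h2 h h5 hdbe⟩
  · rintro ⟨rfl, rfl⟩
    refine ⟨?_, h, ?_, ?_⟩
    · rw [Λ.tgt_ident, Λ.src_comp x be h]
    · rw [← Λ.src_comp x be h, Λ.comp_id]
    · rw [← Λ.src_comp x be h, Λ.comp_id, aux_mce_comp' Λ h]; rfl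

lemma aux_mcepairs_self (x : Λ.Mor) :
    Λ.MCEpairs x x = {(Λ.ident (Λ.src x), Λ.ident (Λ.src x))} := by
  have h : Λ.src x = Λ.tgt (Λ.ident (Λ.src x)) := (Λ.tgt_ident _).symm
  have h2 := aux_mcepairs_comp Λ h
  rw [Λ.comp_id] at h2
  rw [h2, Λ.src_ident]

lemma aux_mcepairs_empty {x y x' y' : Λ.Mor} (hx : Λ.PrefixLe x x') (hy : Λ.PrefixLe y y')
    (hd : Λ.d x = Λ.d y) (hne : x ≠ y) : Λ.MCEpairs x' y' = ∅ := by
  ext q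
  simp only [PGraph.MCEpairs, Set.mem_setOf_eq, Set.mem_empty_iff_false, iff_false]
  rintro ⟨h1, h2, h3, hpx, hpy, -⟩
  exact hne (aux_prefix_unique Λ (aux_prefix_trans Λ hx hpx) (aux_prefix_trans Λ hy hpy) hd)

lemma aux_mcepairs_swap {x y : Λ.Mor} {q : Λ.Mor × Λ.Mor} (hq : q ∈ Λ.MCEpairs x y) :
    q.swap ∈ Λ.MCEpairs y x := by
  obtain ⟨h1, h2, h3, h4⟩ := hq
  refine ⟨h2, h1, h3.symm, ?_⟩
  show Λ.comp y q.2 ∈ Λ.MCE y x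
  rw [← h3, aux_mce_symm Λ y x]
  exact h4

section Rep

variable {A : Type*} [NormedRing A] [StarRing A] [CStarRing A]
  {τ : Λ.Mor → Λ.Mor → A} (hτ : Λ.IsBalRep τ)

include hτ

lemma aux_rep_mul_self {a x b : Λ.Mor} (hax : Λ.Balanced a x) (hxb : Λ.Balanced x b) :
    τ a x * τ x b = τ a b := by
  rw [hτ.2 a x x b hax hxb, aux_mcepairs_self Λ, finsum_mem_singleton]
  show τ (Λ.comp a (Λ.ident (Λ.src x))) (Λ.comp b (Λ.ident (Λ.src x))) = τ a b
  have h1 : Λ.comp a (Λ.ident (Λ.src x)) = a := by rw [← hax.1, Λ.comp_id]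
  have h2 : Λ.comp b (Λ.ident (Λ.src x)) = b := by rw [hxb.1, Λ.comp_id]
  rw [h1, h2]

lemma aux_rep_mul_F {a x lam : Λ.Mor} (hax : Λ.Balanced a x) (h : Λ.src x = Λ.tgt lam) :
    τ a x * τ (Λ.comp x lam) (Λ.comp x lam) = τ (Λ.comp a lam) (Λ.comp x lam) := by
  rw [hτ.2 a x (Λ.comp x lam) (Λ.comp x lam) hax ⟨rfl, rfl⟩, aux_mcepairs_comp Λ h,
    finsum_mem_singleton]
  show τ (Λ.comp a lam) (Λ.comp (Λ.comp x lam) (Λ.ident (Λ.src lam))) = _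
  rw [← Λ.src_comp x lam h, Λ.comp_id]

lemma aux_rep_F_mul {x b lam : Λ.Mor} (hxb : Λ.Balanced x b) (h : Λ.src x = Λ.tgt lam) :
    τ (Λ.comp x lam) (Λ.comp x lam) * τ x b = τ (Λ.comp x lam) (Λ.comp b lam) := by
  rw [hτ.2 (Λ.comp x lam) (Λ.comp x lam) x b ⟨rfl, rfl⟩ hxb, aux_mcepairs_comp' Λ h,
    finsum_mem_singleton]
  show τ (Λ.comp (Λ.comp x lam) (Λ.ident (Λ.src lam))) (Λ.comp b lam) = _
  rw [← Λ.src_comp x lam h, Λ.comp_id]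

lemma aux_rep_zero {a x' y' b x y : Λ.Mor} (hax : Λ.Balanced a x') (hyb : Λ.Balanced y' b)
    (hx : Λ.PrefixLe x x') (hy : Λ.PrefixLe y y') (hd : Λ.d x = Λ.d y) (hne : x ≠ y) :
    τ a x' * τ y' b = 0 := by
  rw [hτ.2 a x' y' b hax hyb, aux_mcepairs_empty Λ hx hy hd hne, finsum_mem_empty]

lemma aux_rep_diag_comm (x y : Λ.Mor) : Commute (τ x x) (τ y y) := by
  show τ x x * τ y y = τ y y * τ x x
  rw [hτ.2 x x y y ⟨rfl, rfl⟩ ⟨rfl, rfl⟩, hτ.2 y y x x ⟨rfl, rfl⟩ ⟨rfl, rfl⟩]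
  refine finsum_mem_eq_of_bijOn Prod.swap
    ⟨fun q hq => aux_mcepairs_swap Λ hq, ?_, fun q hq => ⟨q.swap, aux_mcepairs_swap Λ hq, q.swap_swap⟩⟩ ?_
  · exact fun q _ q' _ hqq => Prod.swap_injective hqq
  · intro q hq
    obtain ⟨-, -, h3, -⟩ := hq
    show τ (Λ.comp x q.1) (Λ.comp y q.2) = τ (Λ.comp y q.2) (Λ.comp x q.1)
    rw [h3]

lemma aux_fac_star {x lam : Λ.Mor} :
    star (τ x x - τ (Λ.comp x lam) (Λ.comp x lam))
      = τ x x - τ (Λ.comp x lam) (Λ.comp x lam) := by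
  rw [star_sub, hτ.1 x x ⟨rfl, rfl⟩, hτ.1 _ _ (⟨rfl, rfl⟩ : Λ.Balanced _ _)]

lemma aux_fac_comm {x lam lam' : Λ.Mor} :
    Commute (τ x x - τ (Λ.comp x lam) (Λ.comp x lam))
      (τ x x - τ (Λ.comp x lam') (Λ.comp x lam')) :=
  (((aux_rep_diag_comm Λ hτ _ _).sub_left (aux_rep_diag_comm Λ hτ _ _)).sub_right
    ((aux_rep_diag_comm Λ hτ _ _).sub_left (aux_rep_diag_comm Λ hτ _ _)))

lemma aux_fac_idem {x lam : Λ.Mor} (h : Λ.src x = Λ.tgt lam) :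
    (τ x x - τ (Λ.comp x lam) (Λ.comp x lam)) * (τ x x - τ (Λ.comp x lam) (Λ.comp x lam))
      = τ x x - τ (Λ.comp x lam) (Λ.comp x lam) := by
  have hee : τ x x * τ x x = τ x x := aux_rep_mul_self Λ hτ ⟨rfl, rfl⟩ ⟨rfl, rfl⟩
  have hef := aux_rep_mul_F Λ hτ (⟨rfl, rfl⟩ : Λ.Balanced x x) h
  have hfe := aux_rep_F_mul Λ hτ (⟨rfl, rfl⟩ : Λ.Balanced x x) h
  have hff : τ (Λ.comp x lam) (Λ.comp x lam) * τ (Λ.comp x lam) (Λ.comp x lam)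
      = τ (Λ.comp x lam) (Λ.comp x lam) := aux_rep_mul_self Λ hτ ⟨rfl, rfl⟩ ⟨rfl, rfl⟩
  rw [sub_mul, mul_sub, mul_sub, hee, hef, hfe, hff]
  abel

lemma aux_comm_list {x a : Λ.Mor} (L : List Λ.Mor) :
    Commute (τ x x - τ (Λ.comp x a) (Λ.comp x a))
      ((L.map fun lam => τ x x - τ (Λ.comp x lam) (Λ.comp x lam)).prod) := by
  apply Commute.list_prod_right
  intro b hb
  simp only [List.mem_map] at hb
  obtain ⟨lam, -, rfl⟩ := hb
  exact aux_fac_comm Λ hτ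

lemma aux_prod_star {x : Λ.Mor} (L : List Λ.Mor) :
    star ((L.map fun lam => τ x x - τ (Λ.comp x lam) (Λ.comp x lam)).prod)
      = (L.map fun lam => τ x x - τ (Λ.comp x lam) (Λ.comp x lam)).prod := by
  induction L with
  | nil => simp
  | cons a L ih =>
    rw [List.map_cons, List.prod_cons, star_mul, ih, aux_fac_star Λ hτ]
    exact ((aux_comm_list Λ hτ L).symm).eq

lemma aux_prod_idem {x : Λ.Mor} {L : List Λ.Mor} (hL : ∀ lam ∈ L, Λ.src x = Λ.tgt lam) :
    (L.map fun lam => τ x x - τ (Λ.comp x lam) (Λ.comp x lam)).prod *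
      (L.map fun lam => τ x x - τ (Λ.comp x lam) (Λ.comp x lam)).prod
      = (L.map fun lam => τ x x - τ (Λ.comp x lam) (Λ.comp x lam)).prod := by
  induction L with
  | nil => simp
  | cons a L ih =>
    rw [List.map_cons, List.prod_cons]
    have key : ∀ fa P : A, fa * P = P * fa → fa * fa = fa → P * P = P →
        (fa * P) * (fa * P) = fa * P := by
      intro fa P hc hfa hP
      calc (fa * P) * (fa * P) = fa * ((P * fa) * P) := by noncomm_ring
        _ = fa * ((fa * P) * P) := by rw [← hc]
        _ = (fa * fa) * (P * P) := by noncomm_ring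
        _ = fa * P := by rw [hfa, hP]
    exact key _ _ (aux_comm_list Λ hτ L).eq
      (aux_fac_idem Λ hτ (hL a (List.mem_cons_self (a := a) (l := L))))
      (ih fun lam hl => hL lam (List.mem_cons_of_mem _ hl))

lemma aux_prod_through {x y : Λ.Mor} (hxy : Λ.Balanced x y) {L : List Λ.Mor}
    (hLx : ∀ lam ∈ L, Λ.src x = Λ.tgt lam) :
    (L.map fun lam => τ x x - τ (Λ.comp x lam) (Λ.comp x lam)).prod * τ x y
      = τ x y * (L.map fun lam => τ y y - τ (Λ.comp y lam) (Λ.comp y lam)).prod := by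
  induction L with
  | nil => simp
  | cons a L ih =>
    have ha := hLx a (List.mem_cons_self (a := a) (l := L))
    have hay : Λ.src y = Λ.tgt a := by rw [← hxy.1]; exact ha
    have single : (τ x x - τ (Λ.comp x a) (Λ.comp x a)) * τ x y
        = τ x y * (τ y y - τ (Λ.comp y a) (Λ.comp y a)) := by
      rw [sub_mul, mul_sub, aux_rep_mul_self Λ hτ ⟨rfl, rfl⟩ hxy,
        aux_rep_F_mul Λ hτ hxy ha, aux_rep_mul_self Λ hτ hxy ⟨rfl, rfl⟩,
        aux_rep_mul_F Λ hτ hxy hay]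
    rw [List.map_cons, List.prod_cons, List.map_cons, List.prod_cons, mul_assoc,
      ih fun lam hl => hLx lam (List.mem_cons_of_mem _ hl), ← mul_assoc, single, mul_assoc]

lemma aux_fac_kill {x a r s : Λ.Mor} (h : Λ.src x = Λ.tgt a) (hrs : Λ.Balanced r s)
    (hd : Λ.d x = Λ.d r) (hne : x ≠ r) :
    (τ x x - τ (Λ.comp x a) (Λ.comp x a)) * τ r s = 0 := by
  rw [sub_mul,
    aux_rep_zero Λ hτ ⟨rfl, rfl⟩ hrs (aux_prefix_refl Λ x) (aux_prefix_refl Λ r) hd hne,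
    aux_rep_zero Λ hτ ⟨rfl, rfl⟩ hrs ⟨a, h, rfl⟩ (aux_prefix_refl Λ r) hd hne, sub_zero]

lemma aux_prod_kill {x r s : Λ.Mor} (hrs : Λ.Balanced r s) (hd : Λ.d x = Λ.d r) (hne : x ≠ r)
    {L : List Λ.Mor} {a : Λ.Mor} (ha : Λ.src x = Λ.tgt a)
    (hL : ∀ lam ∈ L, Λ.src x = Λ.tgt lam) :
    ((τ x x - τ (Λ.comp x a) (Λ.comp x a)) *
      (L.map fun lam => τ x x - τ (Λ.comp x lam) (Λ.comp x lam)).prod) * τ r s = 0 := by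
  induction L generalizing a with
  | nil =>
    simp only [List.map_nil, List.prod_nil, mul_one]
    exact aux_fac_kill Λ hτ ha hrs hd hne
  | cons b L ih =>
    rw [List.map_cons, List.prod_cons, mul_assoc,
      ih (hL b (List.mem_cons_self (a := b) (l := L))) (fun lam hl => hL lam (List.mem_cons_of_mem _ hl)),
      mul_zero]

end Rep

end Aux

/-- With `θ_{μ,ν} := τ_{μ,ν} ∏_{λ∈H}(τ_{ν,ν} − τ_{νλ,νλ})` for a finite
`H ⊆ vΛ∖{v}`, the elements `{θ_{μ,ν} : μ,ν ∈ Λ^p v}` form a family of matrix units: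
`θ_{μ,ν}* = θ_{ν,μ}` and `θ_{μ,ν} θ_{ρ,σ} = δ_{ν,ρ} θ_{μ,σ}`. -/
theorem stmt13 {G : Type u} [Group G] {Q : QLOGroup G} (Λ : PGraph Q)
    (hFA : Λ.FinitelyAligned)
    {A : Type*} [NormedRing A] [StarRing A] [CStarRing A] [CompleteSpace A]
    [NormedAlgebra ℂ A] [StarModule ℂ A]
    (τ : Λ.Mor → Λ.Mor → A) (hτ : Λ.IsBalRep τ)
    (p : G) (v : Λ.Obj) (H : List Λ.Mor) (hnd : H.Nodup)
    (hH : ∀ lam ∈ H, Λ.tgt lam = v ∧ lam ≠ Λ.ident v) :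
    ∀ mu nu rho sig : Λ.Mor,
      Λ.d mu = p → Λ.d nu = p → Λ.d rho = p → Λ.d sig = p →
      Λ.src mu = v → Λ.src nu = v → Λ.src rho = v → Λ.src sig = v →
      star (Λ.theta τ H mu nu) = Λ.theta τ H nu mu ∧
      (nu = rho → Λ.theta τ H mu nu * Λ.theta τ H rho sig = Λ.theta τ H mu sig) ∧
      (nu ≠ rho → Λ.theta τ H mu nu * Λ.theta τ H rho sig = 0) := by
  intro mu nu rho sig hdmu hdnu hdrho hdsig hsmu hsnu hsrho hssig
  have bal : ∀ x y : Λ.Mor, Λ.d x = p → Λ.d y = p → Λ.src x = v → Λ.src y = v →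
      Λ.Balanced x y := fun x y h1 h2 h3 h4 => ⟨h3.trans h4.symm, h1.trans h2.symm⟩
  have hLs : ∀ x : Λ.Mor, Λ.src x = v → ∀ lam ∈ H, Λ.src x = Λ.tgt lam :=
    fun x hx lam hl => hx.trans ((hH lam hl).1).symm
  unfold PGraph.theta
  refine ⟨?_, ?_, ?_⟩
  · rw [star_mul, aux_prod_star Λ hτ H, hτ.1 mu nu (bal mu nu hdmu hdnu hsmu hsnu),
      aux_prod_through Λ hτ (bal nu mu hdnu hdmu hsnu hsmu) (hLs nu hsnu)]
  · rintro rfl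
    calc (τ mu nu * (H.map fun lam => τ nu nu - τ (Λ.comp nu lam) (Λ.comp nu lam)).prod) *
          (τ nu sig * (H.map fun lam => τ sig sig - τ (Λ.comp sig lam) (Λ.comp sig lam)).prod)
        = τ mu nu * (((H.map fun lam => τ nu nu - τ (Λ.comp nu lam) (Λ.comp nu lam)).prod *
            τ nu sig) *
            (H.map fun lam => τ sig sig - τ (Λ.comp sig lam) (Λ.comp sig lam)).prod) := by
          noncomm_ring
      _ = τ mu nu * ((τ nu sig *
            (H.map fun lam => τ sig sig - τ (Λ.comp sig lam) (Λ.comp sig lam)).prod) *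
            (H.map fun lam => τ sig sig - τ (Λ.comp sig lam) (Λ.comp sig lam)).prod) := by
          rw [aux_prod_through Λ hτ (bal nu sig hdnu hdsig hsnu hssig) (hLs nu hsnu)]
      _ = (τ mu nu * τ nu sig) *
            ((H.map fun lam => τ sig sig - τ (Λ.comp sig lam) (Λ.comp sig lam)).prod *
            (H.map fun lam => τ sig sig - τ (Λ.comp sig lam) (Λ.comp sig lam)).prod) := by
          noncomm_ring
      _ = τ mu sig * (H.map fun lam => τ sig sig - τ (Λ.comp sig lam) (Λ.comp sig lam)).prod := by
          rw [aux_rep_mul_self Λ hτ (bal mu nu hdmu hdnu hsmu hsnu)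
            (bal nu sig hdnu hdsig hsnu hssig), aux_prod_idem Λ hτ (hLs sig hssig)]
  · intro hne
    have hdnr : Λ.d nu = Λ.d rho := hdnu.trans hdrho.symm
    cases H with
    | nil =>
      simp only [List.map_nil, List.prod_nil, mul_one]
      exact aux_rep_zero Λ hτ (bal mu nu hdmu hdnu hsmu hsnu) (bal rho sig hdrho hdsig hsrho hssig)
        (aux_prefix_refl Λ nu) (aux_prefix_refl Λ rho) hdnr hne
    | cons a L =>
      simp only [List.map_cons, List.prod_cons]
      have hkill := aux_prod_kill Λ hτ (bal rho sig hdrho hdsig hsrho hssig) hdnr hne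
        (hLs nu hsnu a (List.mem_cons_self (a := a) (l := L)))
        (fun lam hl => hLs nu hsnu lam (List.mem_cons_of_mem _ hl))
      rw [show ∀ X Y Z W : A, (X * Y) * (Z * W) = X * ((Y * Z) * W) from
        fun X Y Z W => by noncomm_ring, hkill, zero_mul, mul_zero]
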